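/- For four positive reals $r_1,r_2,r_3,r_4$, if $Q_{1234} = (\sum_i 1/r_i)^2 - 2\sum_i 1/r_i^2 \leq 0$, then the set $\{r_1,r_2,r_3,r_4\}$ has a strict minimum: there exists a unique index $i$ with $r_i < r_j$ for all $j \neq i$. Moreover, for this index $i$, $1/r_i \geq 1/r_j + 1/r_k + 1/r_l + 2\sqrt{1/(r_j r_k)+1/(r_j r_l)+1/(r_k r_l)}$ where $\{j,k,l\}=\{1,2,3,4\}\setminus\{i\}$. -/
import Mathlib

private lemma sub_lemma (a x y z t : ℝ) (hx : 0 < x) (hy : 0 < y)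
    (hxz : x ≤ z) (hyz : y ≤ z) (hza : z ≤ a)
    (ht : t ^ 2 = x * y + x * z + y * z) (ht0 : 0 ≤ t)
    (h : 2 * t ≤ x + y + z - a) : False := by
  have h1 : 2 * t ≤ x + y := by linarith
  have h2 : 4 * (x * y + x * z + y * z) ≤ (x + y) ^ 2 := by nlinarith [h1, ht0, ht]
  nlinarith [h2, mul_pos hx hy,
    mul_nonneg (by linarith : (0:ℝ) ≤ x + y) (by linarith : (0:ℝ) ≤ 2 * z - (x + y)),
    sq_nonneg (x - y)]

private lemma key_lemma (a x y z : ℝ) (hx : 0 < x) (hy : 0 < y) (hz : 0 < z)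
    (hxa : x ≤ a) (hya : y ≤ a) (hza : z ≤ a)
    (hQ : (a + x + y + z) ^ 2 - 2 * (a ^ 2 + x ^ 2 + y ^ 2 + z ^ 2) ≤ 0) :
    a ≥ x + y + z + 2 * Real.sqrt (x * y + x * z + y * z) := by
  set t := Real.sqrt (x * y + x * z + y * z) with htdef
  have hp : (0:ℝ) < x * y + x * z + y * z := by positivity
  have ht0 : 0 ≤ t := Real.sqrt_nonneg _
  have ht2 : t ^ 2 = x * y + x * z + y * z := Real.sq_sqrt hp.le
  by_contra hcon
  push_neg at hcon
  have hprod : 0 ≤ (x + y + z - a - 2 * t) * (x + y + z - a + 2 * t) := by nlinarith [ht2, hQ]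
  have hpos : 0 < x + y + z - a + 2 * t := by linarith
  have h4 : 2 * t ≤ x + y + z - a := by nlinarith [hprod, hpos]
  rcases le_total x z with h1 | h1 <;> rcases le_total y z with h2 | h2
  · exact sub_lemma a x y z t hx hy h1 h2 hza ht2 ht0 h4
  · exact sub_lemma a x z y t hx hz (by linarith) h2 hya (by linarith [ht2]; ) ht0 (by linarith)
  · exact sub_lemma a y z x t hy hz (by linarith) h1 hxa (by linarith [ht2]) ht0 (by linarith)
  · rcases le_total x y with h3 | h3
    · exact sub_lemma a x z y t hx hz h3 h2 hya (by linarith [ht2]) ht0 (by linarith)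
    · exact sub_lemma a y z x t hy hz h3 h1 hxa (by linarith [ht2]) ht0 (by linarith)

private lemma distinct4 : ∀ (i j k l : Fin 4), ({i,j,k,l} : Finset (Fin 4)) = Finset.univ →
    i ≠ j ∧ i ≠ k ∧ i ≠ l ∧ j ≠ k ∧ j ≠ l ∧ k ≠ l := by decide

private lemma completion : ∀ (i j : Fin 4), i ≠ j →
    ∃ k l : Fin 4, ({i,j,k,l} : Finset (Fin 4)) = Finset.univ := by decide

theorem stmt2 (r : Fin 4 → ℝ) (hr : ∀ m, 0 < r m)
    (hQ : (∑ m, 1 / r m) ^ 2 - 2 * ∑ m, (1 / r m) ^ 2 ≤ 0) :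
    ∃! i : Fin 4, (∀ j, j ≠ i → r i < r j) ∧
      ∀ j k l : Fin 4, ({i, j, k, l} : Finset (Fin 4)) = Finset.univ →
        1 / r i ≥ 1 / r j + 1 / r k + 1 / r l +
          2 * Real.sqrt (1 / (r j * r k) + 1 / (r j * r l) + 1 / (r k * r l)) := by
  obtain ⟨i, hi⟩ := Finite.exists_min r
  have hb : ∀ j, 1 / r j ≤ 1 / r i := fun j => one_div_le_one_div_of_le (hr i) (hi j)
  have hmain : ∀ j k l : Fin 4, ({i, j, k, l} : Finset (Fin 4)) = Finset.univ →
      1 / r i ≥ 1 / r j + 1 / r k + 1 / r l +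
        2 * Real.sqrt (1 / (r j * r k) + 1 / (r j * r l) + 1 / (r k * r l)) := by
    intro j k l hset
    obtain ⟨hij, hik, hil, hjk, hjl, hkl⟩ := distinct4 i j k l hset
    have hsum : ∀ f : Fin 4 → ℝ, ∑ m, f m = f i + f j + f k + f l := by
      intro f
      rw [← hset, Finset.sum_insert (by simp [hij, hik, hil]),
        Finset.sum_insert (by simp [hjk, hjl]), Finset.sum_insert (by simp [hkl]),
        Finset.sum_singleton]
      ring
    rw [hsum (fun m => 1 / r m), hsum (fun m => (1 / r m) ^ 2)] at hQ
    have hK := key_lemma (1 / r i) (1 / r j) (1 / r k) (1 / r l)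
      (by have := hr j; positivity) (by have := hr k; positivity)
      (by have := hr l; positivity) (hb j) (hb k) (hb l)
      (by linarith [hQ])
    have heq : 1 / (r j * r k) + 1 / (r j * r l) + 1 / (r k * r l)
        = 1 / r j * (1 / r k) + 1 / r j * (1 / r l) + 1 / r k * (1 / r l) := by
      field_simp
    rw [heq]
    exact hK
  have hstrict : ∀ j, j ≠ i → r i < r j := by
    intro j hj
    obtain ⟨k, l, hset⟩ := completion i j (Ne.symm hj)
    have h2 := hmain j k l hset
    have hs := Real.sqrt_nonneg (1 / (r j * r k) + 1 / (r j * r l) + 1 / (r k * r l))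
    have hk : 0 < 1 / r k := by have := hr k; positivity
    have hl : 0 < 1 / r l := by have := hr l; positivity
    have hlt : 1 / r j < 1 / r i := by linarith
    by_contra hle
    push_neg at hle
    exact absurd (one_div_le_one_div_of_le (hr j) hle) (not_le.mpr hlt)
  refine ⟨i, ⟨hstrict, hmain⟩, ?_⟩
  rintro i' ⟨h1', _⟩
  by_contra hne
  have ha := hstrict i' hne
  have hbb := h1' i (fun h => hne (h ▸ rfl))
  linarith
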